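/- McKnight's Theorem: a monoid M is finitely generated if and only if every recognizable subset of M is rational. -/

import Mathlib

open Pointwise
/-- Rational subsets of a monoid `M`: the smallest class containing finite
subsets and closed under union, setwise product and generated submonoid. -/
inductive IsRationalSubset {M : Type} [Monoid M] : Set M → Prop
  | finite (L : Set M) : L.Finite → IsRationalSubset L
  | union {K L : Set M} : IsRationalSubset K → IsRationalSubset L → IsRationalSubset (K ∪ L)
  | mul {K L : Set M} : IsRationalSubset K → IsRationalSubset L → IsRationalSubset (K * L)
  | star {L : Set M} : IsRationalSubset L → IsRationalSubset (Submonoid.closure L : Set M)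

/-- A subset of a monoid is recognizable if it is saturated by a homomorphism
to a finite monoid. -/
def IsRecognizableSubset {M : Type} [Monoid M] (L : Set M) : Prop :=
  ∃ (N : Type) (_ : Monoid N) (_ : Finite N) (h : M →* N), h ⁻¹' (h '' L) = L

section McKnightAux

variable {M N : Type} [Monoid M] [Monoid N] (h : M →* N) (A : Set M)

/-- `Go T p l q` means the word `l` over the alphabet `A` drives the state `p`
to the state `q`, with all intermediate states in `T`. -/
inductive Go (T : Set N) : N → List M → N → Prop
  | nil (p : N) : Go T p [] p
  | cons (p : N) (a : M) (l : List M) (q : N) : a ∈ A → (l = [] ∨ p * h a ∈ T) →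
      Go T (p * h a) l q → Go T p (a :: l) q

variable {h A}

lemma go_eval {T : Set N} {p : N} {l : List M} {q : N} (hg : Go h A T p l q) :
    p * h l.prod = q := by
  induction hg with
  | nil p => simp
  | cons p a l q ha _ _ ih => simpa [mul_assoc] using ih

lemma go_mono {T T' : Set N} (hTT : T ⊆ T') {p : N} {l : List M} {q : N}
    (hg : Go h A T p l q) : Go h A T' p l q := by
  induction hg with
  | nil p => exact Go.nil p
  | cons p a l q ha hm _ ih => exact Go.cons p a l q ha (hm.imp id (fun hx => hTT hx)) ih

lemma go_append {T : Set N} {p s q : N} {l₁ l₂ : List M}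
    (h1 : Go h A T p l₁ s) (hs : s ∈ T) (h2 : Go h A T s l₂ q) :
    Go h A T p (l₁ ++ l₂) q := by
  induction h1 with
  | nil p => simpa using h2
  | cons p a l s ha hm hrest ih =>
      refine Go.cons p a (l ++ l₂) q ha (Or.inr ?_) (ih hs h2)
      rcases hm with hl | hmem
      · subst hl
        cases hrest
        exact hs
      · exact hmem

lemma go_univ_of_mem {p : N} {l : List M} (hl : ∀ a ∈ l, a ∈ A) :
    Go h A Set.univ p l (p * h l.prod) := by
  induction l generalizing p with
  | nil => simpa using Go.nil p
  | cons a l ih =>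
      have : Go h A Set.univ (p * h a) l ((p * h a) * h l.prod) :=
        ih (fun b hb => hl b (List.mem_cons_of_mem a hb))
      have he : p * h (a :: l).prod = (p * h a) * h l.prod := by
        simp [mul_assoc]
      rw [he]
      exact Go.cons p a l _ (hl a (List.mem_cons_self (a := a) (l := l))) (Or.inr trivial) this

lemma go_decomp {T : Set N} {r : N} {p q : N} {l : List M}
    (hg : Go h A (insert r T) p l q) :
    Go h A T p l q ∨
      ∃ l₁ l₂, l = l₁ ++ l₂ ∧ l₁ ≠ [] ∧ Go h A T p l₁ r ∧ Go h A (insert r T) r l₂ q := by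
  induction hg with
  | nil p => exact Or.inl (Go.nil p)
  | cons p a l q ha hm hrest ih =>
      rcases hm with hl | hmem
      · subst hl
        cases hrest
        exact Or.inl (Go.cons p a [] _ ha (Or.inl rfl) (Go.nil _))
      · rcases hmem with hr | hT
        · refine Or.inr ⟨[a], l, rfl, by simp, ?_, ?_⟩
          · rw [← hr]
            exact Go.cons p a [] _ ha (Or.inl rfl) (Go.nil _)
          · rw [hr] at hrest; exact hrest
        · rcases ih with h1 | ⟨l₁, l₂, rfl, hne, hg1, hg2⟩
          · exact Or.inl (Go.cons p a l q ha (Or.inr hT) h1)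
          · exact Or.inr ⟨a :: l₁, l₂, rfl, by simp,
              Go.cons p a l₁ r ha (Or.inr hT) hg1, hg2⟩

lemma go_decomp_star {T : Set N} {r : N} :
    ∀ (n : ℕ) (l : List M), l.length ≤ n → ∀ q, Go h A (insert r T) r l q →
      ∃ (ls : List (List M)) (l₂ : List M), l = ls.flatten ++ l₂ ∧
        (∀ li ∈ ls, Go h A T r li r) ∧ Go h A T r l₂ q := by
  intro n
  induction n with
  | zero =>
      intro l hlen q hg
      have : l = [] := List.eq_nil_of_length_eq_zero (Nat.le_zero.1 hlen)
      subst this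
      cases hg
      exact ⟨[], [], by simp, by simp, Go.nil r⟩
  | succ n ih =>
      intro l hlen q hg
      rcases go_decomp hg with h1 | ⟨l₁, l₂, rfl, hne, hg1, hg2⟩
      · exact ⟨[], l, by simp, by simp, h1⟩
      · have hlen2 : l₂.length ≤ n := by
          have h1' : 1 ≤ l₁.length := List.length_pos_iff.2 hne
          have := List.length_append (as := l₁) (bs := l₂)
          omega
        obtain ⟨ls, l₃, hEq, hls, hg3⟩ := ih l₂ hlen2 q hg2
        refine ⟨l₁ :: ls, l₃, ?_, ?_, hg3⟩
        · simp [hEq, List.flatten]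
        · intro li hli
          rcases List.mem_cons.1 hli with rfl | hli
          · exact hg1
          · exact hls li hli

variable (h A)

/-- The set of products of words driving `p` to `q` through `T`. -/
def GoSet (T : Set N) (p q : N) : Set M := {m | ∃ l, Go h A T p l q ∧ l.prod = m}

variable {h A}

lemma go_of_mem_closure {T : Set N} {r : N} {c : M}
    (hc : c ∈ Submonoid.closure (GoSet h A T r r)) :
    ∃ l, Go h A (insert r T) r l r ∧ l.prod = c := by
  induction hc using Submonoid.closure_induction with
  | mem x hx =>
      obtain ⟨l, hg, rfl⟩ := hx
      exact ⟨l, go_mono (Set.subset_insert r T) hg, rfl⟩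
  | one => exact ⟨[], Go.nil r, rfl⟩
  | mul x y hx hy ihx ihy =>
      obtain ⟨lx, hgx, rfl⟩ := ihx
      obtain ⟨ly, hgy, rfl⟩ := ihy
      exact ⟨lx ++ ly, go_append hgx (Set.mem_insert r T) hgy, List.prod_append⟩

lemma goSet_insert (T : Set N) (r p q : N) :
    GoSet h A (insert r T) p q =
      GoSet h A T p q ∪
        GoSet h A T p r *
          ((Submonoid.closure (GoSet h A T r r) : Set M) * GoSet h A T r q) := by
  ext m
  constructor
  · rintro ⟨l, hg, rfl⟩
    rcases go_decomp hg with h1 | ⟨l₁, l₂, rfl, hne, hg1, hg2⟩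
    · exact Or.inl ⟨l, h1, rfl⟩
    · obtain ⟨ls, l₃, rfl, hls, hg3⟩ := go_decomp_star l₂.length l₂ le_rfl q hg2
      refine Or.inr ?_
      have hmem1 : l₁.prod ∈ GoSet h A T p r := ⟨l₁, hg1, rfl⟩
      have hmem2 : ls.flatten.prod ∈ (Submonoid.closure (GoSet h A T r r) : Set M) := by
        rw [List.prod_flatten]
        refine Submonoid.list_prod_mem _ ?_
        intro x hx
        obtain ⟨li, hli, rfl⟩ := List.mem_map.1 hx
        exact Submonoid.subset_closure ⟨li, hls li hli, rfl⟩
      have hmem3 : l₃.prod ∈ GoSet h A T r q := ⟨l₃, hg3, rfl⟩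
      have := Set.mul_mem_mul hmem1 (Set.mul_mem_mul hmem2 hmem3)
      have heq : (l₁ ++ (ls.flatten ++ l₃)).prod =
          l₁.prod * (ls.flatten.prod * l₃.prod) := by
        simp [List.prod_append]
      rw [heq]
      exact this
  · rintro (⟨l, hg, rfl⟩ | hmem)
    · exact ⟨l, go_mono (Set.subset_insert r T) hg, rfl⟩
    · obtain ⟨x, hx, z, hz, rfl⟩ := hmem
      obtain ⟨c, hc, y, hy, rfl⟩ := hz
      obtain ⟨l₁, hg1, rfl⟩ := hx
      obtain ⟨lc, hgc, rfl⟩ := go_of_mem_closure hc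
      obtain ⟨l₂, hg2, rfl⟩ := hy
      refine ⟨l₁ ++ (lc ++ l₂), ?_, by simp [List.prod_append]⟩
      exact go_append (go_mono (Set.subset_insert r T) hg1) (Set.mem_insert r T)
        (go_append hgc (Set.mem_insert r T) (go_mono (Set.subset_insert r T) hg2))

lemma goSet_rational (hA : A.Finite) {T : Set N} (hT : T.Finite) :
    ∀ p q, IsRationalSubset (GoSet h A T p q) := by
  induction T, hT using Set.Finite.induction_on with
  | empty =>
      intro p q
      refine IsRationalSubset.finite _ ?_
      refine ((hA.insert 1).subset ?_)
      rintro m ⟨l, hg, rfl⟩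
      cases hg with
      | nil p => simp
      | cons p a l q ha hm hrest =>
          rcases hm with hl | hmem
          · subst hl
            cases hrest
            simp [ha]
          · exact absurd hmem (Set.notMem_empty _)
  | @insert r T _ _ ih =>
      intro p q
      rw [goSet_insert]
      exact IsRationalSubset.union (ih p q)
        (IsRationalSubset.mul (ih p r)
          (IsRationalSubset.mul (IsRationalSubset.star (ih r r)) (ih r q)))

end McKnightAux

lemma rat_biUnion {M : Type} [Monoid M] {ι : Type} (s : Finset ι) (f : ι → Set M)
    (hf : ∀ i ∈ s, IsRationalSubset (f i)) : IsRationalSubset (⋃ i ∈ s, f i) := by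
  classical
  induction s using Finset.induction_on with
  | empty => simpa using IsRationalSubset.finite ∅ Set.finite_empty
  | @insert a s ha ih =>
      rw [Finset.set_biUnion_insert]
      exact IsRationalSubset.union (hf a (Finset.mem_insert_self a s))
        (ih fun i hi => hf i (Finset.mem_insert_of_mem hi))

lemma rat_sub_fg {M : Type} [Monoid M] {L : Set M} (hL : IsRationalSubset L) :
    ∃ S : Set M, S.Finite ∧ L ⊆ (Submonoid.closure S : Set M) := by
  induction hL with
  | finite L hfin => exact ⟨L, hfin, Submonoid.subset_closure⟩
  | union hK hL ihK ihL =>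
      obtain ⟨S₁, h1, hs1⟩ := ihK
      obtain ⟨S₂, h2, hs2⟩ := ihL
      refine ⟨S₁ ∪ S₂, h1.union h2, ?_⟩
      rintro m (hm | hm)
      · exact Submonoid.closure_mono Set.subset_union_left (hs1 hm)
      · exact Submonoid.closure_mono Set.subset_union_right (hs2 hm)
  | mul hK hL ihK ihL =>
      obtain ⟨S₁, h1, hs1⟩ := ihK
      obtain ⟨S₂, h2, hs2⟩ := ihL
      refine ⟨S₁ ∪ S₂, h1.union h2, ?_⟩
      rintro m ⟨x, hx, y, hy, rfl⟩
      exact mul_mem (Submonoid.closure_mono Set.subset_union_left (hs1 hx))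
        (Submonoid.closure_mono Set.subset_union_right (hs2 hy))
  | star hL ihL =>
      obtain ⟨S, hS, hs⟩ := ihL
      exact ⟨S, hS, Submonoid.closure_le.2 hs⟩

/-- McKnight's theorem: a monoid is finitely generated iff every recognizable
subset is rational. -/
theorem mcknight_theorem (M : Type) [Monoid M] :
    Monoid.FG M ↔ ∀ L : Set M, IsRecognizableSubset L → IsRationalSubset L := by
  constructor
  · rintro hfg L ⟨N, _, _, h, hL⟩
    obtain ⟨A, hcl, hAfin⟩ := Monoid.fg_iff.1 hfg
    haveI : Fintype N := Fintype.ofFinite N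
    have key : ∀ n : N, GoSet h A Set.univ 1 n = h ⁻¹' {n} := by
      intro n
      ext m
      constructor
      · rintro ⟨l, hg, rfl⟩
        have := go_eval hg
        simpa using this
      · intro hm
        have hmT : m ∈ Submonoid.closure A := by rw [hcl]; trivial
        obtain ⟨l, hl, rfl⟩ := Submonoid.exists_list_of_mem_closure hmT
        refine ⟨l, ?_, rfl⟩
        have := go_univ_of_mem (h := h) (p := (1 : N)) hl
        have he : (1 : N) * h l.prod = n := by simpa using hm
        rwa [he] at this
    classical
    have hLeq : L = ⋃ n ∈ ((h '' L).toFinite.toFinset), GoSet h A Set.univ 1 n := by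
      conv_lhs => rw [← hL]
      ext m
      simp [key, Set.mem_preimage, eq_comm]
    rw [hLeq]
    exact rat_biUnion _ _ (fun n _ => goSet_rational hAfin Set.finite_univ 1 n)
  · intro H
    have huniv : IsRecognizableSubset (Set.univ : Set M) := by
      refine ⟨PUnit, inferInstance, inferInstance, 1, ?_⟩
      ext m
      simp
    obtain ⟨S, hSfin, hsub⟩ := rat_sub_fg (H _ huniv)
    refine Monoid.fg_iff.2 ⟨S, ?_, hSfin⟩
    rw [eq_top_iff]
    intro m _
    exact hsub (Set.mem_univ m)
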